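/- arXiv:1502.07845 — 2 statements merged into one kernel-verified Lean document; each statement's English description precedes it below -/
import Mathlib

section
/- Let K > 0. There exist λ₀ > 0 and C > 0 such that the following holds for every traceless real 2×2 matrix P = [[a,b],[c,−a]] with ‖P‖ ≤ K and every λ ∈ [0,λ₀]: for each θ ∈ ℝ there is a unique S_{λP}(θ) ∈ ℝ with |S_{λP}(θ) − θ| < π/2 such that the unit vector e_{S_{λP}(θ)} equals ± exp(λP)e_θ/‖exp(λP)e_θ‖, and it satisfies |S_{λP}(θ) − θ − λ p(θ) − (λ²/2) p(θ) p'(θ)| ≤ C λ³, where p(θ) = −a sin(2θ) − b sin²(θ) + c cos²(θ). -/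
noncomputable section

open Real

/-- Euclidean norm of a vector in `ℝ²` (represented as `Fin 2 → ℝ`). -/
def vnorm (v : Fin 2 → ℝ) : ℝ := Real.sqrt (v 0 ^ 2 + v 1 ^ 2)

/-- The unit vector `e_θ = (cos θ, sin θ)`. -/
def uvec (θ : ℝ) : Fin 2 → ℝ := ![Real.cos θ, Real.sin θ]

/-- The function `p(θ) = -a sin(2θ) - b sin²θ + c cos²θ` attached to the traceless
matrix `P = [[a,b],[c,-a]]`. -/
def pfun (P : Matrix (Fin 2) (Fin 2) ℝ) (θ : ℝ) : ℝ :=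
  -(P 0 0) * Real.sin (2 * θ) - (P 0 1) * Real.sin θ ^ 2 + (P 1 0) * Real.cos θ ^ 2



lemma abs_sub'' (x y : ℝ) : |x - y| ≤ |x| + |y| := by
  rw [sub_eq_add_neg]
  exact (abs_add_le _ _).trans (by rw [abs_neg])

lemma arctan_taylor (u : ℝ) : |Real.arctan u - u| ≤ |u|^3 := by
  have key := Convex.norm_image_sub_le_of_norm_hasDerivWithin_le
    (f := fun t : ℝ => Real.arctan t - t) (f' := fun t : ℝ => 1/(1+t^2) - 1)
    (s := Set.Icc (-|u|) |u|) (C := u^2) (x := (0:ℝ)) (y := u)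
    (fun t _ => ((Real.hasDerivAt_arctan t).sub (hasDerivAt_id t)).hasDerivWithinAt)
    ?_ (convex_Icc _ _) ?_ ?_
  · have h0 : Real.arctan 0 - 0 = 0 := by simp
    calc |Real.arctan u - u| = ‖(Real.arctan u - u) - (Real.arctan 0 - 0)‖ := by
          rw [h0]; simp
      _ ≤ u^2 * ‖u - 0‖ := key
      _ = |u|^3 := by
          rw [sub_zero, Real.norm_eq_abs, ← sq_abs]; ring
  · intro t ht
    have h1 : (0:ℝ) < 1 + t^2 := by positivity
    have h2 : |t| ≤ |u| := by
      rw [abs_le]; exact ⟨ht.1, ht.2⟩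
    have heq : (1:ℝ)/(1+t^2) - 1 = -(t^2/(1+t^2)) := by field_simp; ring
    rw [Real.norm_eq_abs, heq, abs_neg, abs_of_nonneg (by positivity)]
    have ht2 : t^2 ≤ u^2 := by
      rw [← sq_abs t, ← sq_abs u]; exact pow_le_pow_left₀ (abs_nonneg t) h2 2
    have : t^2/(1+t^2) ≤ t^2 := by
      rw [div_le_iff₀ h1]; nlinarith [sq_nonneg t]
    linarith
  · constructor <;> simp [abs_nonneg]
  · constructor
    · linarith [neg_abs_le u]
    · exact le_abs_self u

lemma sq_of_traceless (P : Matrix (Fin 2) (Fin 2) ℝ) (h : P.trace = 0) :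
    P * P = (P 0 0 ^ 2 + P 0 1 * P 1 0) • (1 : Matrix (Fin 2) (Fin 2) ℝ) := by
  have htr := Matrix.trace_fin_two P
  have h11 : P 1 1 = -(P 0 0) := by rw [h] at htr; linarith
  ext i j
  fin_cases i <;> fin_cases j <;>
    simp [Matrix.mul_apply, Fin.sum_univ_two, Matrix.one_apply, h11] <;> ring

lemma pow_even_odd (A : Matrix (Fin 2) (Fin 2) ℝ) (μ : ℝ)
    (hA : A * A = μ • (1 : Matrix (Fin 2) (Fin 2) ℝ)) (k : ℕ) :
    A ^ (2*k) = μ^k • (1 : Matrix (Fin 2) (Fin 2) ℝ) ∧ A ^ (2*k+1) = μ^k • A := by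
  induction k with
  | zero => simp
  | succ k ih =>
    have h1 : A ^ (2*(k+1)) = μ^(k+1) • (1 : Matrix (Fin 2) (Fin 2) ℝ) := by
      have : 2*(k+1) = (2*k+1)+1 := by ring
      rw [this, pow_succ, ih.2, smul_mul_assoc, hA, smul_smul, pow_succ]
    refine ⟨h1, ?_⟩
    rw [pow_succ, h1, smul_mul_assoc, one_mul]

lemma summable_aux (μ : ℝ) (d : ℕ → ℕ) (hd : ∀ k, k ≤ d k) :
    Summable (fun k : ℕ => μ^k / Nat.factorial (d k)) := by
  refine Summable.of_norm_bounded (Real.summable_pow_div_factorial |μ|) (fun k => ?_)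
  rw [Real.norm_eq_abs, abs_div, abs_pow,
    abs_of_nonneg (by positivity : (0:ℝ) ≤ (Nat.factorial (d k) : ℝ))]
  gcongr
  exact hd k

lemma sum_near_one (μ : ℝ) (hμ : |μ| ≤ 1/2) (d : ℕ → ℕ) (hd0 : Nat.factorial (d 0) = 1)
    (hd : ∀ k, k ≤ d k) (hd2 : ∀ k, 2 ≤ Nat.factorial (d (k+1))) :
    |(∑' k:ℕ, μ^k / Nat.factorial (d k)) - 1| ≤ |μ| := by
  have hsum := summable_aux μ d hd
  rw [Summable.tsum_eq_zero_add hsum]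
  have h0 : μ^0 / Nat.factorial (d 0) = 1 := by simp [hd0]
  rw [h0]
  simp only [add_sub_cancel_left]
  have hgeo : Summable (fun k : ℕ => |μ|/2 * |μ|^k) :=
    (summable_geometric_of_lt_one (abs_nonneg μ) (by linarith)).mul_left _
  have hsum1 : Summable (fun k : ℕ => μ^(k+1) / Nat.factorial (d (k+1))) := by
    exact_mod_cast (summable_nat_add_iff 1).2 hsum
  have hb : ∀ k : ℕ, ‖μ^(k+1) / Nat.factorial (d (k+1))‖ ≤ |μ|/2 * |μ|^k := by
    intro k
    rw [Real.norm_eq_abs, abs_div, abs_pow,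
      abs_of_nonneg (by positivity : (0:ℝ) ≤ (Nat.factorial (d (k+1)) : ℝ))]
    have h2 : (2:ℝ) ≤ (Nat.factorial (d (k+1)) : ℝ) := by exact_mod_cast hd2 k
    calc |μ|^(k+1) / (Nat.factorial (d (k+1)) : ℝ) ≤ |μ|^(k+1) / 2 := by gcongr
      _ = |μ|/2 * |μ|^k := by ring
  calc |∑' k:ℕ, μ^(k+1) / Nat.factorial (d (k+1))| ≤ ∑' k:ℕ, |μ|/2 * |μ|^k := by
        refine (norm_tsum_le_tsum_norm ?_).trans (Summable.tsum_le_tsum hb ?_ hgeo)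
        · exact hsum1.abs
        · exact hsum1.norm
    _ = |μ|/2 * (1 - |μ|)⁻¹ := by
        rw [tsum_mul_left, tsum_geometric_of_lt_one (abs_nonneg μ) (by linarith)]
    _ ≤ |μ| := by
        have h1 : (1 - |μ|)⁻¹ ≤ 2 := by
          rw [inv_le_iff_one_le_mul₀ (by linarith)]; linarith
        have := abs_nonneg μ
        nlinarith

lemma exp_closed_form (A : Matrix (Fin 2) (Fin 2) ℝ) (μ : ℝ)
    (hA : A * A = μ • (1 : Matrix (Fin 2) (Fin 2) ℝ)) :
    NormedSpace.exp A = (∑' k:ℕ, μ^k / Nat.factorial (2*k)) • (1 : Matrix (Fin 2) (Fin 2) ℝ)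
      + (∑' k:ℕ, μ^k / Nat.factorial (2*k+1)) • A := by
  have hs1 : Summable (fun k : ℕ => μ^k / Nat.factorial (2*k)) :=
    summable_aux μ _ (fun k => by omega)
  have hs2 : Summable (fun k : ℕ => μ^k / Nat.factorial (2*k+1)) :=
    summable_aux μ _ (fun k => by omega)
  have he : HasSum (fun k : ℕ => ((Nat.factorial (2*k) : ℝ))⁻¹ • A^(2*k))
      ((∑' k:ℕ, μ^k / Nat.factorial (2*k)) • (1 : Matrix (Fin 2) (Fin 2) ℝ)) := by
    have h := hs1.hasSum.smul_const (1 : Matrix (Fin 2) (Fin 2) ℝ)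
    convert h using 2 with k
    rw [(pow_even_odd A μ hA k).1, smul_smul, div_eq_mul_inv, mul_comm]
  have ho : HasSum (fun k : ℕ => ((Nat.factorial (2*k+1) : ℝ))⁻¹ • A^(2*k+1))
      ((∑' k:ℕ, μ^k / Nat.factorial (2*k+1)) • A) := by
    have h := hs2.hasSum.smul_const A
    convert h using 2 with k
    rw [(pow_even_odd A μ hA k).2, smul_smul, div_eq_mul_inv, mul_comm]
  have hsum : HasSum (fun n : ℕ => ((Nat.factorial n : ℝ))⁻¹ • A^n)
      ((∑' k:ℕ, μ^k / Nat.factorial (2*k)) • (1 : Matrix (Fin 2) (Fin 2) ℝ)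
        + (∑' k:ℕ, μ^k / Nat.factorial (2*k+1)) • A) :=
    HasSum.even_add_odd he ho
  rw [NormedSpace.exp_eq_tsum (𝕂 := ℝ)]
  exact hsum.tsum_eq

lemma pfun_deriv (P : Matrix (Fin 2) (Fin 2) ℝ) (θ : ℝ) :
    deriv (pfun P) θ = -2 * ((P 0 0) * (Real.cos θ ^ 2 - Real.sin θ ^ 2)
      + (P 0 1 + P 1 0) * Real.sin θ * Real.cos θ) := by
  have h1 : HasDerivAt (fun t : ℝ => Real.sin (2*t)) (Real.cos (2*θ) * 2) θ := by
    simpa [Function.comp_def] using (Real.hasDerivAt_sin (2*θ)).comp θ ((hasDerivAt_id θ).const_mul 2)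
  have h2 : HasDerivAt (fun t : ℝ => Real.sin t ^ 2) (2 * Real.sin θ ^ 1 * Real.cos θ) θ :=
    (Real.hasDerivAt_sin θ).pow 2
  have h3 : HasDerivAt (fun t : ℝ => Real.cos t ^ 2) (2 * Real.cos θ ^ 1 * (-Real.sin θ)) θ :=
    (Real.hasDerivAt_cos θ).pow 2
  have h : HasDerivAt (pfun P)
      (-(P 0 0) * (Real.cos (2*θ) * 2) - (P 0 1) * (2 * Real.sin θ ^ 1 * Real.cos θ)
        + (P 1 0) * (2 * Real.cos θ ^ 1 * (-Real.sin θ))) θ :=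
    ((h1.const_mul (-(P 0 0))).sub (h2.const_mul (P 0 1))).add (h3.const_mul (P 1 0))
  rw [h.deriv, Real.cos_two_mul']
  ring


set_option maxHeartbeats 1600000 in
/-- Perturbative expansion of the projective action
`S_{λP}` of `exp(λP)` on the circle, uniformly over traceless `P` with `‖P‖ ≤ K`. -/
theorem projective_action_expansion (K : ℝ) (hK : 0 < K) :
    ∃ lam0 > (0 : ℝ), ∃ C > (0 : ℝ),
      ∀ P : Matrix (Fin 2) (Fin 2) ℝ, P.trace = 0 → (∀ i j, |P i j| ≤ K) →
      ∀ lam ∈ Set.Icc (0 : ℝ) lam0, ∀ θ : ℝ,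
        (∃! S : ℝ, |S - θ| < π / 2 ∧
          ∃ c : ℝ, c ≠ 0 ∧
            (NormedSpace.exp (lam • P)).mulVec (uvec θ) = c • uvec S) ∧
        ∀ S : ℝ, (|S - θ| < π / 2 ∧
            ∃ c : ℝ, c ≠ 0 ∧
              (NormedSpace.exp (lam • P)).mulVec (uvec θ) = c • uvec S) →
          |S - θ - lam * pfun P θ - lam ^ 2 / 2 * pfun P θ * deriv (pfun P) θ|
            ≤ C * lam ^ 3 := by
  refine ⟨1/(16*(K+1)^2), by positivity, 2000*(K+1)^3, by positivity, ?_⟩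
  intro P htr hPK lam hlam θ
  obtain ⟨hlam0, hlam1⟩ := hlam
  have hK1 : (0:ℝ) < K + 1 := by linarith
  have hKK1 : K ≤ (K+1)^2 := by nlinarith
  have hlamK : lam * K ≤ 1/16 := by
    calc lam * K ≤ (1/(16*(K+1)^2)) * K := by
          apply mul_le_mul_of_nonneg_right hlam1 hK.le
      _ ≤ 1/16 := by
          rw [div_mul_eq_mul_div, div_le_div_iff₀ (by positivity) (by norm_num)]
          nlinarith
  have hlam_le : lam ≤ 1/16 := by
    have h1 : (1:ℝ) ≤ (K+1)^2 := by nlinarith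
    calc lam ≤ 1/(16*(K+1)^2) := hlam1
      _ ≤ 1/16 := by
          rw [div_le_div_iff₀ (by positivity) (by norm_num)]; nlinarith
  -- abbreviations
  set a := P 0 0 with ha_def
  set b := P 0 1 with hb_def
  set c := P 1 0 with hc_def
  have haK : |a| ≤ K := hPK 0 0
  have hbK : |b| ≤ K := hPK 0 1
  have hcK : |c| ≤ K := hPK 1 0
  set δ := a^2 + b*c with hδ_def
  set μ := lam^2 * δ with hμ_def
  set A := lam • P with hA_def
  have hA2 : A * A = μ • (1 : Matrix (Fin 2) (Fin 2) ℝ) := by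
    rw [hA_def, smul_mul_smul_comm, sq_of_traceless P htr, smul_smul]
    congr 1
    rw [hμ_def, hδ_def]; ring
  set CC := ∑' k:ℕ, μ^k / Nat.factorial (2*k) with hCC_def
  set SS := ∑' k:ℕ, μ^k / Nat.factorial (2*k+1) with hSS_def
  have hexp : NormedSpace.exp A
      = CC • (1 : Matrix (Fin 2) (Fin 2) ℝ) + SS • A := exp_closed_form A μ hA2
  have h11 : P 1 1 = -a := by
    have htr2 := Matrix.trace_fin_two P
    rw [htr] at htr2; rw [ha_def]; linarith
  set cs := Real.cos θ with hcs_def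
  set sn := Real.sin θ with hsn_def
  have hpyth : sn^2 + cs^2 = 1 := Real.sin_sq_add_cos_sq θ
  set p := pfun P θ with hp_def
  have hp_eq : p = -a*(2*sn*cs) - b*sn^2 + c*cs^2 := by
    rw [hp_def, pfun, Real.sin_two_mul, ← hsn_def, ← hcs_def, ← ha_def, ← hb_def, ← hc_def]
  set q := a*(cs^2 - sn^2) + (b+c)*sn*cs with hq_def
  have hderiv : deriv (pfun P) θ = -2*q := by
    rw [pfun_deriv P θ, ← hsn_def, ← hcs_def, ← ha_def, ← hb_def, ← hc_def, hq_def]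
  set x := CC + lam*SS*q with hx_def
  set y := lam*SS*p with hy_def
  set v := (NormedSpace.exp A).mulVec (uvec θ) with hv_def
  -- components
  have hv0' : v 0 = CC * cs + SS * lam * (a*cs + b*sn) := by
    rw [hv_def, hexp]
    simp [Matrix.add_mulVec, Matrix.smul_mulVec, Matrix.mulVec, dotProduct,
      uvec, Fin.sum_univ_two, Matrix.one_apply, hA_def, Matrix.smul_apply,
      ← hsn_def, ← hcs_def, ← ha_def, ← hb_def]
    ring
  have hv1' : v 1 = CC * sn + SS * lam * (c*cs - a*sn) := by
    rw [hv_def, hexp]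
    simp [Matrix.add_mulVec, Matrix.smul_mulVec, Matrix.mulVec, dotProduct,
      uvec, Fin.sum_univ_two, Matrix.one_apply, hA_def, Matrix.smul_apply,
      ← hsn_def, ← hcs_def, ← ha_def, ← hc_def, h11]
    ring
  have hv0 : v 0 = x*cs - y*sn := by
    rw [hv0', hx_def, hy_def, hq_def, hp_eq]
    linear_combination (-(SS*lam*(a*cs + b*sn))) * hpyth
  have hv1 : v 1 = x*sn + y*cs := by
    rw [hv1', hx_def, hy_def, hq_def, hp_eq]
    linear_combination (-(SS*lam*(c*cs - a*sn))) * hpyth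
  clear_value a b c δ μ A CC SS cs sn p q x y v
  -- basic trig bounds
  have hcs1 : cs^2 ≤ 1 := by nlinarith only [sq_nonneg sn, hpyth]
  have hsn1 : sn^2 ≤ 1 := by nlinarith only [sq_nonneg cs, hpyth]
  have habs1 : |cs^2 - sn^2| ≤ 1 := by
    rw [abs_le]; constructor <;> nlinarith only [sq_nonneg sn, sq_nonneg cs, hpyth]
  have habs2 : |sn*cs| ≤ 1/2 := by
    rw [abs_le]; constructor <;> nlinarith only [sq_nonneg (sn-cs), sq_nonneg (sn+cs), hpyth]
  have hq_abs : |q| ≤ 2*K := by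
    rw [hq_def]
    refine (abs_add_le _ _).trans ?_
    have e1 : |a*(cs^2-sn^2)| ≤ K*1 := by
      rw [abs_mul]; exact mul_le_mul haK habs1 (abs_nonneg _) hK.le
    have e2 : |(b+c)*sn*cs| ≤ (2*K)*(1/2) := by
      rw [mul_assoc, abs_mul]
      refine mul_le_mul ((abs_add_le b c).trans (by linarith only [hbK, hcK])) habs2 (abs_nonneg _) (by linarith only [hK])
    linarith only [e1, e2]
  have hp_abs : |p| ≤ 3*K := by
    rw [hp_eq]
    have e0 : |2*sn*cs| ≤ 1 := by
      rw [show (2:ℝ)*sn*cs = 2*(sn*cs) by ring, abs_mul, abs_two]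
      linarith only [habs2]
    have step : -a*(2*sn*cs) - b*sn^2 + c*cs^2
        = (-a)*(2*sn*cs) + (-(b*sn^2)) + c*cs^2 := by ring
    rw [step]
    refine ((abs_add_le _ _).trans (add_le_add (abs_add_le _ _) le_rfl)).trans ?_
    have e1 : |(-a)*(2*sn*cs)| ≤ K*1 := by
      rw [abs_mul, abs_neg]; exact mul_le_mul haK e0 (abs_nonneg _) hK.le
    have e2 : |-(b*sn^2)| ≤ K*1 := by
      rw [abs_neg, abs_mul, abs_of_nonneg (sq_nonneg sn)]
      exact mul_le_mul hbK hsn1 (sq_nonneg sn) hK.le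
    have e3 : |c*cs^2| ≤ K*1 := by
      rw [abs_mul, abs_of_nonneg (sq_nonneg cs)]
      exact mul_le_mul hcK hcs1 (sq_nonneg cs) hK.le
    linarith only [e1, e2, e3]
  have hδ_abs : |δ| ≤ 2*K^2 := by
    rw [hδ_def]
    refine (abs_add_le _ _).trans ?_
    rw [abs_pow, abs_mul]
    nlinarith only [abs_nonneg a, abs_nonneg b, abs_nonneg c, haK, hbK, hcK, sq_abs a, hK]
  have hμ_abs : |μ| ≤ 2*lam^2*K^2 := by
    rw [hμ_def, abs_mul, abs_pow, abs_of_nonneg hlam0]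
    nlinarith only [sq_nonneg lam, hδ_abs, abs_nonneg δ]
  have hlamnn : (0:ℝ) ≤ lam*K := mul_nonneg hlam0 hK.le
  have hμ_small : |μ| ≤ 1/128 := by
    have : 2*lam^2*K^2 = 2*(lam*K)*(lam*K) := by ring
    rw [this] at hμ_abs
    nlinarith only [hμ_abs, hlamnn, hlamK, this]
  have hCC1 : |CC - 1| ≤ |μ| := by
    rw [hCC_def]
    refine sum_near_one μ (by linarith) (fun k => 2*k) rfl (fun k => by change k ≤ 2*k; omega) (fun k => ?_)
    calc 2 = Nat.factorial 2 := rfl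
      _ ≤ Nat.factorial (2*(k+1)) := Nat.factorial_le (by omega)
  have hSS1 : |SS - 1| ≤ |μ| := by
    rw [hSS_def]
    refine sum_near_one μ (by linarith) (fun k => 2*k+1) rfl (fun k => by change k ≤ 2*k+1; omega) (fun k => ?_)
    calc 2 = Nat.factorial 2 := rfl
      _ ≤ Nat.factorial (2*(k+1)+1) := Nat.factorial_le (by omega)
  have hCC_lb : 1 - 1/128 ≤ CC := by
    have h := abs_le.1 hCC1; linarith only [h.1, h.2, hμ_small, abs_nonneg μ]
  have hSS_ub : |SS| ≤ 2 := by
    calc |SS| = |(SS - 1) + 1| := by ring_nf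
      _ ≤ |SS - 1| + |(1:ℝ)| := abs_add_le _ _
      _ ≤ 2 := by rw [abs_one]; linarith only [hSS1, hμ_small]
  have hSSCC : |SS - CC| ≤ 2*|μ| := by
    calc |SS - CC| = |(SS-1) - (CC-1)| := by ring_nf
      _ ≤ |SS-1| + |CC-1| := abs_sub'' _ _
      _ ≤ 2*|μ| := by linarith only [hCC1, hSS1]
  have hx_lb : 1/2 ≤ x := by
    have h1 : |lam*SS*q| ≤ 4*(lam*K) := by
      rw [abs_mul, abs_mul, abs_of_nonneg hlam0]
      have h := mul_le_mul hSS_ub hq_abs (abs_nonneg q) (by norm_num : (0:ℝ) ≤ 2)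
      nlinarith only [h, abs_nonneg SS, abs_nonneg q, hlam0, hlamK]
    have h2 := neg_abs_le (lam*SS*q)
    rw [hx_def]
    nlinarith only [h1, h2, hCC_lb, hlamK, hlamnn]
  have hx_pos : 0 < x := by linarith only [hx_lb]
  have hy_abs : |y| ≤ 6*(lam*K) := by
    rw [hy_def, abs_mul, abs_mul, abs_of_nonneg hlam0]
    have h := mul_le_mul hSS_ub hp_abs (abs_nonneg p) (by norm_num : (0:ℝ) ≤ 2)
    nlinarith only [h, abs_nonneg SS, abs_nonneg p, hlam0]
  have hu_abs : |y/x| ≤ 12*(lam*K) := by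
    rw [abs_div, abs_of_pos hx_pos, div_le_iff₀ hx_pos]
    nlinarith only [hy_abs, hx_lb, hlamnn]
  -- the canonical angle
  set r := Real.sqrt (x^2 + y^2) with hr_def
  have hr_pos : 0 < r := Real.sqrt_pos.2 (by nlinarith only [hx_pos, sq_nonneg y])
  have hsqrt : Real.sqrt (1 + (y/x)^2) = r / x := by
    have h1 : 1 + (y/x)^2 = (x^2+y^2)/x^2 := by field_simp
    rw [h1, Real.sqrt_div (by positivity) _, Real.sqrt_sq hx_pos.le, hr_def]
  have hcosφ : Real.cos (Real.arctan (y/x)) = x / r := by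
    rw [Real.cos_arctan, hsqrt, one_div_div]
  have hsinφ : Real.sin (Real.arctan (y/x)) = y / r := by
    rw [Real.sin_arctan, hsqrt]
    rw [div_div_div_eq, mul_comm y x, mul_div_mul_left _ _ hx_pos.ne']
  set S₀ := θ + Real.arctan (y/x) with hS₀_def
  have hS₀θ : |S₀ - θ| < π/2 := by
    rw [hS₀_def, add_sub_cancel_left, abs_lt]
    exact ⟨Real.neg_pi_div_two_lt_arctan _, Real.arctan_lt_pi_div_two _⟩
  have hS₀v : v = r • uvec S₀ := by
    funext i
    fin_cases i
    · show v 0 = (r • uvec S₀) 0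
      rw [hv0]
      simp only [Pi.smul_apply, uvec, Matrix.cons_val_zero, smul_eq_mul]
      rw [hS₀_def, Real.cos_add, hcosφ, hsinφ, ← hcs_def, ← hsn_def]
      field_simp
    · show v 1 = (r • uvec S₀) 1
      rw [hv1]
      simp only [Pi.smul_apply, uvec, Matrix.cons_val_one, Matrix.head_cons, Matrix.cons_val_zero, smul_eq_mul]
      rw [hS₀_def, Real.sin_add, hcosφ, hsinφ, ← hcs_def, ← hsn_def]
      field_simp
  have huniq : ∀ S1 : ℝ, (|S1 - θ| < π / 2 ∧
      ∃ c : ℝ, c ≠ 0 ∧ v = c • uvec S1) → S1 = S₀ := by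
    rintro S1 ⟨hS1θ, c1, hc1, hvc1⟩
    rw [hS₀v] at hvc1
    have hcos_eq : r * Real.cos S₀ = c1 * Real.cos S1 := by
      have := congrFun hvc1 0
      simpa [uvec] using this
    have hsin_eq : r * Real.sin S₀ = c1 * Real.sin S1 := by
      have := congrFun hvc1 1
      simpa [uvec] using this
    have hzero : c1 * Real.sin (S1 - S₀) = 0 := by
      rw [Real.sin_sub]
      have hpyth0 : Real.sin S₀ ^ 2 + Real.cos S₀ ^ 2 = 1 := Real.sin_sq_add_cos_sq S₀
      linear_combination (Real.sin S₀) * hcos_eq - (Real.cos S₀) * hsin_eq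
    have hsin0 : Real.sin (S1 - S₀) = 0 := by
      rcases mul_eq_zero.1 hzero with h | h
      · exact absurd h hc1
      · exact h
    obtain ⟨n, hn⟩ := Real.sin_eq_zero_iff.1 hsin0
    have hlt : |S1 - S₀| < π := by
      calc |S1 - S₀| = |(S1 - θ) - (S₀ - θ)| := by ring_nf
        _ ≤ |S1 - θ| + |S₀ - θ| := abs_sub'' _ _
        _ < π := by linarith only [hS1θ, hS₀θ, Real.pi_pos]
    have hn0 : n = 0 := by
      by_contra hne
      have h1 : (1:ℝ) ≤ |(n:ℝ)| := by
        exact_mod_cast Int.one_le_abs hne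
      rw [← hn, abs_mul, abs_of_pos Real.pi_pos] at hlt
      nlinarith only [Real.pi_pos, h1, hlt]
    rw [hn0] at hn
    simp at hn
    linarith only [hn]
  constructor
  · exact ⟨S₀, ⟨hS₀θ, r, hr_pos.ne', hS₀v⟩, huniq⟩
  · intro S hS
    have hSeq : S = S₀ := huniq S hS
    rw [hSeq, hderiv]
    have htarget : S₀ - θ - lam * p - lam^2/2 * p * (-2*q)
        = (Real.arctan (y/x) - y/x) + (y/x - (lam*p - lam^2*p*q)) := by
      rw [hS₀_def]; ring
    rw [htarget]
    -- bound the two pieces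
    have hpiece1 : |Real.arctan (y/x) - y/x| ≤ 1728*K^3*lam^3 := by
      refine (arctan_taylor _).trans ?_
      have h1 : |y/x|^3 ≤ (12*(lam*K))^3 :=
        pow_le_pow_left₀ (abs_nonneg _) hu_abs 3
      calc |y/x|^3 ≤ (12*(lam*K))^3 := h1
        _ = 1728*K^3*lam^3 := by ring
    have hM_eq : y - (lam*p - lam^2*p*q)*x
        = lam*p*((SS-CC)*(1-lam*q) + lam^2*SS*q^2) := by
      rw [hy_def, hx_def]; ring
    have he1 : |1 - lam*q| ≤ 2 := by
      refine (abs_sub'' _ _).trans ?_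
      rw [abs_one, abs_mul, abs_of_nonneg hlam0]
      nlinarith only [abs_nonneg q, hq_abs, hlam0, hlamK]
    have hi1 : |(SS-CC)*(1-lam*q)| ≤ 8*lam^2*K^2 := by
      rw [abs_mul]
      have h4 : |SS-CC| ≤ 4*lam^2*K^2 := by linarith only [hSSCC, hμ_abs]
      calc |SS-CC| * |1-lam*q| ≤ (4*lam^2*K^2) * 2 :=
            mul_le_mul h4 he1 (abs_nonneg _) (by positivity)
        _ = 8*lam^2*K^2 := by ring
    have hi2 : |lam^2*SS*q^2| ≤ 8*lam^2*K^2 := by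
      rw [abs_mul, abs_mul, abs_of_nonneg (sq_nonneg lam), abs_of_nonneg (sq_nonneg q)]
      have hq2 : q^2 ≤ 4*K^2 := by nlinarith only [abs_nonneg q, sq_abs q, hq_abs]
      have t1 : |SS| * q^2 ≤ 2*(4*K^2) :=
        mul_le_mul hSS_ub hq2 (sq_nonneg q) (by norm_num)
      calc lam^2 * |SS| * q^2 = lam^2 * (|SS| * q^2) := by ring
        _ ≤ lam^2 * (2*(4*K^2)) := mul_le_mul_of_nonneg_left t1 (sq_nonneg lam)
        _ = 8*lam^2*K^2 := by ring
    have hinner : |(SS-CC)*(1-lam*q) + lam^2*SS*q^2| ≤ 16*lam^2*K^2 :=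
      (abs_add_le _ _).trans (by linarith only [hi1, hi2])
    have hM_abs : |y - (lam*p - lam^2*p*q)*x| ≤ 48*K^3*lam^3 := by
      rw [hM_eq, abs_mul, abs_mul, abs_of_nonneg hlam0]
      calc lam * |p| * |(SS-CC)*(1-lam*q) + lam^2*SS*q^2|
          ≤ lam * (3*K) * (16*lam^2*K^2) := by
            refine mul_le_mul (mul_le_mul_of_nonneg_left hp_abs hlam0) hinner
              (abs_nonneg _) (by positivity)
        _ = 48*K^3*lam^3 := by ring
    have hpiece2 : |y/x - (lam*p - lam^2*p*q)| ≤ 96*K^3*lam^3 := by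
      have he : y/x - (lam*p - lam^2*p*q) = (y - (lam*p - lam^2*p*q)*x) / x := by
        field_simp
      rw [he, abs_div, abs_of_pos hx_pos, div_le_iff₀ hx_pos]
      nlinarith only [hM_abs, hx_lb, mul_nonneg (pow_nonneg hK.le 3) (pow_nonneg hlam0 3), abs_nonneg (y - (lam*p - lam^2*p*q)*x)]
    refine (abs_add_le _ _).trans ?_
    have hfin : K^3 ≤ (K+1)^3 := by nlinarith only [hK]
    nlinarith only [hpiece1, hpiece2, hfin, pow_nonneg hlam0 3,
      mul_nonneg (pow_nonneg hlam0 3) (pow_nonneg hK.le 3),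
      mul_nonneg (pow_nonneg hlam0 3) (sub_nonneg.2 hfin)]

end
end

section
/- Let K > 0. There exist λ₀ > 0 and C > 0 such that for all traceless real 2×2 matrices P, Q with ‖P‖ ≤ K, ‖Q‖ ≤ K, every λ ∈ [0,λ₀] and every θ ∈ ℝ: | ‖exp(λP + λ²Q) e_θ‖² − 1 − 2λ⟨e_θ, P e_θ⟩ − λ²(2⟨e_θ, Q e_θ⟩ + ‖P e_θ‖² − det P) | ≤ C λ³. -/
noncomputable section

/-- Euclidean inner product on `ℝ²`. -/
def vdot (v w : Fin 2 → ℝ) : ℝ := v 0 * w 0 + v 1 * w 1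

open NormedSpace
open scoped Nat NNReal Matrix

attribute [local instance] Matrix.linftyOpNormedRing Matrix.linftyOpNormedAlgebra

/-- Second order Taylor bound for the exponential in a Banach algebra. -/
theorem exp_taylor_two' {A' : Type*} [NormedRing A'] [NormedAlgebra ℝ A'] [CompleteSpace A']
    (A : A') (hA : ‖A‖ ≤ 1) :
    ‖exp A - (1 + A + (2⁻¹:ℝ) • A^2)‖ ≤ 3 * ‖A‖^3 := by
  set f : ℕ → A' := fun n => ((n ! : ℝ))⁻¹ • A ^ n with hf
  have hsum : Summable f := expSeries_summable' A
  have key := Summable.sum_add_tsum_nat_add 3 hsum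
  have hexp : exp A = ∑' n, f n := by rw [exp_eq_tsum ℝ]
  have hpartial : ∑ i ∈ Finset.range 3, f i = 1 + A + (2⁻¹:ℝ) • A^2 := by
    simp [hf, Finset.sum_range_succ, Nat.factorial]
  have hdiff : exp A - (1 + A + (2⁻¹:ℝ) • A^2) = ∑' n, f (n + 3) := by
    rw [hexp, ← hpartial, ← key]; abel
  rw [hdiff]
  have hnorms : Summable fun n => ‖f (n + 3)‖ :=
    (summable_nat_add_iff 3).mpr (norm_expSeries_summable' A)
  have hg : Summable fun n : ℕ => ‖A‖^3 * (‖A‖^n / n !) :=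
    (Real.summable_pow_div_factorial ‖A‖).mul_left _
  have hb : ∀ n : ℕ, ‖f (n + 3)‖ ≤ ‖A‖^3 * (‖A‖^n / n !) := by
    intro n
    have h1 : ‖f (n+3)‖ ≤ (((n+3)! : ℝ))⁻¹ * ‖A‖^(n+3) := by
      rw [hf]
      simp only [norm_smul, Real.norm_eq_abs]
      rw [abs_of_nonneg (by positivity)]
      gcongr
      exact norm_pow_le' A (by omega)
    refine h1.trans ?_
    have h2 : (((n+3)! : ℝ))⁻¹ ≤ ((n ! : ℝ))⁻¹ := by
      apply inv_anti₀ (by positivity)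
      exact_mod_cast Nat.factorial_le (by omega)
    calc (((n+3)! : ℝ))⁻¹ * ‖A‖^(n+3) ≤ ((n ! : ℝ))⁻¹ * ‖A‖^(n+3) := by
          gcongr
      _ = ‖A‖^3 * (‖A‖^n / n !) := by rw [pow_add]; ring
  calc ‖∑' n, f (n+3)‖ ≤ ∑' n, ‖f (n+3)‖ := norm_tsum_le_tsum_norm hnorms
    _ ≤ ∑' n : ℕ, ‖A‖^3 * (‖A‖^n / n !) := Summable.tsum_le_tsum hb hnorms hg
    _ = ‖A‖^3 * ∑' n : ℕ, (‖A‖^n / n !) := tsum_mul_left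
    _ = ‖A‖^3 * Real.exp ‖A‖ := by
        congr 1
        rw [Real.exp_eq_exp_ℝ, exp_eq_tsum_div]
    _ ≤ ‖A‖^3 * 3 := by
        have h3 : Real.exp ‖A‖ ≤ 3 := by
          have h4 := Real.exp_one_lt_d9
          have h5 := Real.exp_le_exp.mpr hA
          linarith
        have h6 : (0:ℝ) ≤ ‖A‖^3 := by positivity
        nlinarith
    _ = 3 * ‖A‖^3 := by ring

theorem mat_norm_le' (A : Matrix (Fin 2) (Fin 2) ℝ) {K : ℝ} (h : ∀ i j, |A i j| ≤ K) :
    ‖A‖ ≤ 2 * K := by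
  have hK0 : 0 ≤ K := le_trans (abs_nonneg _) (h 0 0)
  rw [Matrix.linfty_opNorm_def]
  have h2 : ∀ i, (∑ j, ‖A i j‖₊ : ℝ≥0) ≤ ⟨2*K, by positivity⟩ := by
    intro i
    apply NNReal.coe_le_coe.mp
    push_cast
    rw [Fin.sum_univ_two]
    have := h i 0; have := h i 1
    simp only [coe_nnnorm, Real.norm_eq_abs]
    change _ ≤ 2*K
    linarith
  have h3 : (Finset.univ.sup fun i : Fin 2 => ∑ j, ‖A i j‖₊) ≤ ⟨2*K, by positivity⟩ :=
    Finset.sup_le fun i _ => h2 i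
  exact_mod_cast h3

theorem vdot_bound' (x y : Fin 2 → ℝ) {cx cy : ℝ} (hx : ‖x‖ ≤ cx) (hy : ‖y‖ ≤ cy) :
    |vdot x y| ≤ 2 * (cx * cy) := by
  have h00 := norm_le_pi_norm x 0
  have h01 := norm_le_pi_norm x 1
  have h10 := norm_le_pi_norm y 0
  have h11 := norm_le_pi_norm y 1
  simp only [Real.norm_eq_abs] at h00 h01 h10 h11
  have hx0 : 0 ≤ ‖x‖ := norm_nonneg x
  have hy0 : 0 ≤ ‖y‖ := norm_nonneg y
  have key : |vdot x y| ≤ 2 * (‖x‖ * ‖y‖) := by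
    have := abs_nonneg (x 0); have := abs_nonneg (x 1)
    have := abs_nonneg (y 0); have := abs_nonneg (y 1)
    calc |vdot x y| ≤ |x 0| * |y 0| + |x 1| * |y 1| := by
          rw [vdot]
          refine (abs_add_le _ _).trans ?_; rw [abs_mul, abs_mul]
      _ ≤ 2 * (‖x‖ * ‖y‖) := by nlinarith
  refine key.trans ?_
  have : ‖x‖ * ‖y‖ ≤ cx * cy := mul_le_mul hx hy hy0 (hx0.trans hx)
  linarith

theorem smul_vdot_bound' {t : ℝ} (ht : 0 ≤ t) (x y : Fin 2 → ℝ) {cx cy : ℝ}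
    (hx : ‖x‖ ≤ cx) (hy : ‖y‖ ≤ cy) :
    |t * vdot x y| ≤ t * (2 * (cx * cy)) := by
  rw [abs_mul, abs_of_nonneg ht]
  exact mul_le_mul_of_nonneg_left (vdot_bound' x y hx hy) ht

theorem mulVec_norm_le' (A : Matrix (Fin 2) (Fin 2) ℝ) (x : Fin 2 → ℝ) {cA cx : ℝ}
    (hA : ‖A‖ ≤ cA) (hx : ‖x‖ ≤ cx) : ‖A *ᵥ x‖ ≤ cA * cx :=
  (Matrix.linfty_opNorm_mulVec A x).trans
    (mul_le_mul hA hx (norm_nonneg x) ((norm_nonneg A).trans hA))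

set_option maxHeartbeats 2000000 in
/-- Second order expansion of `‖exp(λP + λ²Q) e_θ‖²`, uniformly
over traceless `P, Q` with entries bounded by `K` and `θ ∈ ℝ`. -/
theorem norm_sq_expansion (K : ℝ) (hK : 0 < K) :
    ∃ lam0 > (0 : ℝ), ∃ C > (0 : ℝ),
      ∀ P Q : Matrix (Fin 2) (Fin 2) ℝ, P.trace = 0 → Q.trace = 0 →
      (∀ i j, |P i j| ≤ K) → (∀ i j, |Q i j| ≤ K) →
      ∀ lam ∈ Set.Icc (0 : ℝ) lam0, ∀ θ : ℝ,
        |vnorm ((NormedSpace.exp (lam • P + lam ^ 2 • Q)).mulVec (uvec θ)) ^ 2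
            - 1 - 2 * lam * vdot (uvec θ) (P.mulVec (uvec θ))
            - lam ^ 2 * (2 * vdot (uvec θ) (Q.mulVec (uvec θ))
                + vnorm (P.mulVec (uvec θ)) ^ 2 - P.det)|
          ≤ C * lam ^ 3 := by
  refine ⟨min 1 (1/(4*K)), by positivity, 3584*K^3 + 128*K^4 + 48*K^2 + 1, by positivity, ?_⟩
  intro P Q hPtr hQtr hPK hQK lam hlam θ
  obtain ⟨hlam0, hlam1⟩ := hlam
  have hlam_le1 : lam ≤ 1 := hlam1.trans (min_le_left _ _)
  have hlam_inv : lam ≤ 1/(4*K) := hlam1.trans (min_le_right _ _)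
  have hKl : 4*K*lam ≤ 1 := by
    have h := mul_le_mul_of_nonneg_left hlam_inv (le_of_lt (by positivity : (0:ℝ) < 4*K))
    rw [mul_one_div, div_self (by positivity : (4*K) ≠ 0)] at h
    linarith
  have hKl0 : (0:ℝ) ≤ 4*K*lam := by positivity
  set v : Fin 2 → ℝ := uvec θ with hvdef
  have hvn : ‖v‖ ≤ 1 := by
    rw [hvdef, uvec, pi_norm_le_iff_of_nonneg zero_le_one]
    intro i; fin_cases i <;>
      simp [Real.norm_eq_abs, Real.abs_cos_le_one, Real.abs_sin_le_one]
  have hv : v 0 ^ 2 + v 1 ^ 2 = 1 := by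
    rw [hvdef]
    simp only [uvec, Matrix.cons_val_zero, Matrix.cons_val_one, Matrix.head_cons]
    exact Real.cos_sq_add_sin_sq θ
  set M : Matrix (Fin 2) (Fin 2) ℝ := lam • P + lam ^ 2 • Q with hMdef
  have hPn : ‖P‖ ≤ 2*K := mat_norm_le' P hPK
  have hQn : ‖Q‖ ≤ 2*K := mat_norm_le' Q hQK
  have hMn : ‖M‖ ≤ 4*K*lam := by
    have h1 : ‖M‖ ≤ ‖lam • P‖ + ‖lam ^ 2 • Q‖ := norm_add_le _ _
    rw [norm_smul, norm_smul, Real.norm_eq_abs, Real.norm_eq_abs, abs_of_nonneg hlam0,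
      abs_of_nonneg (pow_nonneg hlam0 2)] at h1
    have h2 : lam * ‖P‖ ≤ lam * (2*K) := mul_le_mul_of_nonneg_left hPn hlam0
    have h3 : lam ^ 2 * ‖Q‖ ≤ lam ^ 2 * (2*K) := mul_le_mul_of_nonneg_left hQn (pow_nonneg hlam0 2)
    have h4 : lam ^ 2 * (2*K) ≤ lam * (2*K) := by
      nlinarith only [mul_le_mul_of_nonneg_left hlam_le1 hlam0, hK.le, hlam0]
    linarith only [h1, h2, h3, h4]
  have hM1 : ‖M‖ ≤ 1 := hMn.trans hKl
  set S : Matrix (Fin 2) (Fin 2) ℝ := 1 + M + (2⁻¹:ℝ) • M^2 with hSdef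
  set R : Matrix (Fin 2) (Fin 2) ℝ := exp M - S with hRdef
  have hRn : ‖R‖ ≤ 3 * ‖M‖^3 := by
    rw [hRdef, hSdef]; exact exp_taylor_two' M hM1
  have hRn' : ‖R‖ ≤ 192*(K^3*lam^3) := by
    have h2 : ‖M‖^3 ≤ (4*K*lam)^3 := pow_le_pow_left₀ (norm_nonneg M) hMn 3
    calc ‖R‖ ≤ 3 * ‖M‖^3 := hRn
      _ ≤ 3 * (4*K*lam)^3 := by linarith
      _ = 192*(K^3*lam^3) := by ring
  have hR3 : ‖R‖ ≤ 3 := by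
    have h2 : ‖M‖^3 ≤ 1 := pow_le_one₀ (norm_nonneg M) hM1
    linarith
  set a : Fin 2 → ℝ := P *ᵥ v with hadef
  set b : Fin 2 → ℝ := Q *ᵥ v with hbdef
  set mv : Fin 2 → ℝ := M *ᵥ v with hmvdef
  set m2v : Fin 2 → ℝ := (M*M) *ᵥ v with hm2vdef
  set c : Fin 2 → ℝ := P *ᵥ b + Q *ᵥ a with hcdef
  set d : Fin 2 → ℝ := Q *ᵥ b with hddef
  set s : Fin 2 → ℝ := S *ᵥ v with hsdef2
  set r : Fin 2 → ℝ := R *ᵥ v with hrdef2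
  -- norm bounds on vectors
  have hna : ‖a‖ ≤ 2*K := by
    have := mulVec_norm_le' P v hPn hvn; rw [← hadef] at this; simpa using this
  have hnb : ‖b‖ ≤ 2*K := by
    have := mulVec_norm_le' Q v hQn hvn; rw [← hbdef] at this; simpa using this
  have hnmv : ‖mv‖ ≤ 4*K*lam := by
    have := mulVec_norm_le' M v hMn hvn; rw [← hmvdef] at this; simpa using this
  have hnMM : ‖M*M‖ ≤ (4*K*lam)*(4*K*lam) :=
    (Matrix.linfty_opNorm_mul M M).trans (mul_le_mul hMn hMn (norm_nonneg M) hKl0)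
  have hnm2v : ‖m2v‖ ≤ (4*K*lam)*(4*K*lam) := by
    have := mulVec_norm_le' (M*M) v hnMM hvn; rw [← hm2vdef] at this; simpa using this
  have hnPb : ‖P *ᵥ b‖ ≤ 2*K*(2*K) := mulVec_norm_le' P b hPn hnb
  have hnQa : ‖Q *ᵥ a‖ ≤ 2*K*(2*K) := mulVec_norm_le' Q a hQn hna
  have hnc : ‖c‖ ≤ 8*K^2 := by
    rw [hcdef]
    refine (norm_add_le _ _).trans ?_
    linarith only [hnPb, hnQa]
  have hnd : ‖d‖ ≤ 4*K^2 := by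
    rw [hddef]
    refine (mulVec_norm_le' Q b hQn hnb).trans ?_
    linarith only []
  have hnr : ‖r‖ ≤ 192*(K^3*lam^3) := by
    have := mulVec_norm_le' R v hRn' hvn; rw [← hrdef2] at this; simpa using this
  have hnr3 : ‖r‖ ≤ 3 := by
    have := mulVec_norm_le' R v hR3 hvn; rw [← hrdef2] at this; simpa using this
  -- vector identities
  have hE : exp M = S + R := by rw [hRdef]; abel
  have hwvec : exp M *ᵥ v = s + r := by
    rw [hsdef2, hrdef2, hE, Matrix.add_mulVec]
  have hsvec : s = v + mv + (2⁻¹:ℝ) • m2v := by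
    rw [hsdef2, hmvdef, hm2vdef, hSdef, Matrix.add_mulVec, Matrix.add_mulVec,
      Matrix.one_mulVec, Matrix.smul_mulVec, pow_two]
  have hns : ‖s‖ ≤ 3 := by
    rw [hsvec]
    have h1 : ‖v + mv + (2⁻¹:ℝ) • m2v‖ ≤ ‖v + mv‖ + ‖(2⁻¹:ℝ) • m2v‖ := norm_add_le _ _
    have h2 : ‖v + mv‖ ≤ ‖v‖ + ‖mv‖ := norm_add_le _ _
    have h3 : ‖(2⁻¹:ℝ) • m2v‖ = 2⁻¹ * ‖m2v‖ := by
      rw [norm_smul, Real.norm_eq_abs]; norm_num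
    have h4 : (4*K*lam)*(4*K*lam) ≤ 1 := by nlinarith only [hKl, hKl0]
    have h5 : 4*K*lam ≤ 1 := hKl
    rw [h3] at h1
    linarith only [h1, h2, hnm2v, hnmv, hvn, h4, h5, norm_nonneg m2v, norm_nonneg mv]
  have hmvvec : mv = lam • a + lam^2 • b := by
    rw [hmvdef, hadef, hbdef, hMdef, Matrix.add_mulVec, Matrix.smul_mulVec,
      Matrix.smul_mulVec]
  have htr : P 0 0 + P 1 1 = 0 := by
    rw [Matrix.trace_fin_two] at hPtr; exact hPtr
  have hP2 : P * P = (-P.det) • (1 : Matrix (Fin 2) (Fin 2) ℝ) := by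
    ext i j
    fin_cases i <;> fin_cases j <;>
      simp [Matrix.mul_apply, Fin.sum_univ_two, Matrix.det_fin_two, Matrix.smul_apply,
        Matrix.one_apply, smul_eq_mul]
    · linear_combination (P 0 0) * htr
    · linear_combination (P 0 1) * htr
    · linear_combination (P 1 0) * htr
    · linear_combination (P 1 1) * htr
  have hPa : P *ᵥ a = (-P.det) • v := by
    rw [hadef, Matrix.mulVec_mulVec, hP2, Matrix.smul_mulVec, Matrix.one_mulVec]
  have hm2vvec : m2v = lam^2 • ((-P.det) • v) + lam^3 • c + lam^4 • d := by
    rw [hm2vdef, ← Matrix.mulVec_mulVec, ← hmvdef, hmvvec, Matrix.mulVec_add,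
      Matrix.mulVec_smul, Matrix.mulVec_smul, hMdef, Matrix.add_mulVec, Matrix.add_mulVec,
      Matrix.smul_mulVec, Matrix.smul_mulVec, Matrix.smul_mulVec,
      Matrix.smul_mulVec, hPa, hcdef, hddef]
    module
  -- pointwise versions
  have e1 : ∀ i, (exp M *ᵥ v) i = s i + r i := by
    intro i; rw [hwvec]; simp only [Pi.add_apply]
  have e2 : ∀ i, s i = v i + mv i + 2⁻¹ * m2v i := by
    intro i; rw [hsvec]; simp only [Pi.add_apply, Pi.smul_apply, smul_eq_mul]
  have e3 : ∀ i, mv i = lam * a i + lam^2 * b i := by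
    intro i; rw [hmvvec]; simp only [Pi.add_apply, Pi.smul_apply, smul_eq_mul]
  have e4 : ∀ i, m2v i = lam^2 * (-P.det * v i) + lam^3 * c i + lam^4 * d i := by
    intro i; rw [hm2vvec]
    simp only [Pi.add_apply, Pi.smul_apply, smul_eq_mul]
  have hnorm2 : ∀ w : Fin 2 → ℝ, vnorm w ^ 2 = vdot w w := by
    intro w
    rw [vnorm, Real.sq_sqrt (by positivity), vdot]; ring
  simp only [hnorm2]
  have key : vdot (exp M *ᵥ v) (exp M *ᵥ v) - 1 - 2 * lam * vdot v a
      - lam ^ 2 * (2 * vdot v b + vdot a a - P.det)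
      = (2*(vdot s r) + vdot r r) + (2*lam^3)*(vdot a b) + lam^4*(vdot b b)
        + lam^3*(vdot v c) + lam^4*(vdot v d) + vdot mv m2v + 4⁻¹*(vdot m2v m2v) := by
    simp only [vdot, e1, e2, e3, e4]
    linear_combination (1 - lam^2 * P.det) * hv
  rw [key]
  -- per-term bounds
  have hl3 : (0:ℝ) ≤ lam^3 := pow_nonneg hlam0 3
  have hl4 : (0:ℝ) ≤ lam^4 := pow_nonneg hlam0 4
  have hl43 : lam^4 ≤ lam^3 := by
    nlinarith only [mul_le_mul_of_nonneg_left hlam_le1 hl3]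
  have h_sr : |vdot s r| ≤ 2*(3*(192*(K^3*lam^3))) := vdot_bound' s r hns hnr
  have h_rr : |vdot r r| ≤ 2*((192*(K^3*lam^3))*3) := vdot_bound' r r hnr hnr3
  have h_ab : |(2*lam^3)*(vdot a b)| ≤ (2*lam^3)*(2*((2*K)*(2*K))) :=
    smul_vdot_bound' (by linarith) a b hna hnb
  have h_bb : |lam^4*(vdot b b)| ≤ lam^4*(2*((2*K)*(2*K))) :=
    smul_vdot_bound' hl4 b b hnb hnb
  have h_vc : |lam^3*(vdot v c)| ≤ lam^3*(2*(1*(8*K^2))) :=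
    smul_vdot_bound' hl3 v c hvn hnc
  have h_vd : |lam^4*(vdot v d)| ≤ lam^4*(2*(1*(4*K^2))) :=
    smul_vdot_bound' hl4 v d hvn hnd
  have h_mm : |vdot mv m2v| ≤ 2*((4*K*lam)*((4*K*lam)*(4*K*lam))) :=
    vdot_bound' mv m2v hnmv hnm2v
  have h_m2 : |4⁻¹*(vdot m2v m2v)| ≤ 4⁻¹*(2*(((4*K*lam)*(4*K*lam))*((4*K*lam)*(4*K*lam)))) :=
    smul_vdot_bound' (by norm_num) m2v m2v hnm2v hnm2v
  -- extract two-sided bounds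
  obtain ⟨l1, u1⟩ := abs_le.mp h_sr
  obtain ⟨l2, u2⟩ := abs_le.mp h_rr
  obtain ⟨l3, u3⟩ := abs_le.mp h_ab
  obtain ⟨l4, u4⟩ := abs_le.mp h_bb
  obtain ⟨l5, u5⟩ := abs_le.mp h_vc
  obtain ⟨l6, u6⟩ := abs_le.mp h_vd
  obtain ⟨l7, u7⟩ := abs_le.mp h_mm
  obtain ⟨l8, u8⟩ := abs_le.mp h_m2
  have m1 : K^2*lam^4 ≤ K^2*lam^3 := mul_le_mul_of_nonneg_left hl43 (by positivity)
  have m2' : K^4*lam^4 ≤ K^4*lam^3 := mul_le_mul_of_nonneg_left hl43 (by positivity)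
  rw [abs_le]
  constructor <;>
    linarith only [l1, u1, l2, u2, l3, u3, l4, u4, l5, u5, l6, u6, l7, u7, l8, u8,
      hl3, m1, m2', hK.le]

end
end
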